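/- Let X1,...,Xm be i.i.d. Bernoulli(p) and p̂ = (1/m)∑Xi. Then with probability at least 1 − δ, p ≤ p̂ + sqrt(2·p̂·log(1/δ)/m) + 4·log(1/δ)/m. -/

import Mathlib

open MeasureTheory
open scoped ENNReal

lemma exp_neg_le_quadratic' {x : ℝ} (hx : 0 ≤ x) : Real.exp (-x) ≤ 1 - x + x^2/2 := by
  have key : MonotoneOn (fun y : ℝ => 1 - y + y^2/2 - Real.exp (-y)) (Set.Ici 0) := by
    have hd : ∀ y : ℝ, HasDerivAt (fun y : ℝ => 1 - y + y^2/2 - Real.exp (-y))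
        (-1 + y + Real.exp (-y)) y := by
      intro y
      have hexp : HasDerivAt (fun y : ℝ => Real.exp (-y)) (-Real.exp (-y)) y := by
        simpa using (hasDerivAt_id y).neg.exp
      have hpoly : HasDerivAt (fun y : ℝ => 1 - y + y^2/2) (-1 + y) y := by
        have := ((hasDerivAt_const y (1:ℝ)).sub (hasDerivAt_id y)).add
          ((hasDerivAt_pow 2 y).div_const 2)
        exact this.congr_deriv (by norm_num)
      have := hpoly.sub hexp
      exact this.congr_deriv (by ring)
    apply monotoneOn_of_deriv_nonneg (convex_Ici 0)
    · exact Continuous.continuousOn (by continuity)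
    · exact fun y _ => (hd y).differentiableAt.differentiableWithinAt
    · intro y hy
      rw [(hd y).deriv]
      have := Real.add_one_le_exp (-y)
      linarith
  have h0 := key Set.self_mem_Ici hx hx
  simp at h0
  linarith [h0]

lemma det_aux {q a L mm : ℝ} (hq0 : 0 ≤ q) (ha : 0 ≤ a) (hL : 0 ≤ L) (hmm : 0 < mm)
    (h : q ≤ a + Real.sqrt (2*q*L/mm)) : q ≤ a + Real.sqrt (2*a*L/mm) + 4*L/mm := by
  set b := Real.sqrt (2*L/mm) with hb
  have hbnn : 0 ≤ b := Real.sqrt_nonneg _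
  have hbL : 0 ≤ 2*L/mm := by positivity
  have hb2 : b^2 = 2*L/mm := Real.sq_sqrt hbL
  have htq : Real.sqrt (2*q*L/mm) = Real.sqrt q * b := by
    rw [hb, ← Real.sqrt_mul hq0]
    congr 1; ring
  have hta : Real.sqrt (2*a*L/mm) = Real.sqrt a * b := by
    rw [hb, ← Real.sqrt_mul ha]
    congr 1; ring
  rw [htq] at h
  set x := Real.sqrt q with hx
  set y := Real.sqrt a with hy
  have hxnn : 0 ≤ x := Real.sqrt_nonneg _
  have hynn : 0 ≤ y := Real.sqrt_nonneg _
  have hx2 : x^2 = q := Real.sq_sqrt hq0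
  have hy2 : y^2 = a := Real.sq_sqrt ha
  have hxy : x ≤ y + b := by nlinarith [h, hx2, hy2]
  rw [hta]
  have h2 : x*b ≤ y*b + b^2 := by nlinarith [mul_le_mul_of_nonneg_right hxy hbnn]
  have h3 : b^2 ≤ 4*L/mm := by
    rw [hb2]
    exact div_le_div_of_nonneg_right (by linarith) hmm.le |>.trans_eq rfl
  linarith [h, h2, h3]

/-- Empirical frequency of heads among `m` coin flips. -/
noncomputable def empFreq (m : ℕ) (ω : Fin m → Bool) : ℝ :=
  ((Finset.univ.filter fun i => ω i = true).card : ℝ) / m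

/-- Bernstein-type bound: for `m` i.i.d. Bernoulli(`p`) flips, with probability
at least `1 - δ`, `p ≤ p̂ + sqrt(2·p̂·log(1/δ)/m) + 4·log(1/δ)/m` where `p̂` is
the empirical frequency of heads. -/
theorem bernstein_upper_bound
    (m : ℕ) (hm : 0 < m) (p : ℝ≥0∞) (hp1 : p ≤ 1)
    (δ : ℝ) (hδ : δ ∈ Set.Ioo (0 : ℝ) 1) :
    Measure.pi (fun _ : Fin m => (PMF.bernoulli p.toNNReal (by simpa using ENNReal.toNNReal_mono ENNReal.one_ne_top hp1)).toMeasure)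
      {ω | p.toReal ≤ empFreq m ω
            + Real.sqrt (2 * empFreq m ω * Real.log (1 / δ) / m)
            + 4 * Real.log (1 / δ) / m}
      ≥ 1 - ENNReal.ofReal δ := by
  obtain ⟨hδ0, hδ1⟩ := hδ
  have hL : 0 < Real.log (1/δ) := Real.log_pos (by rw [lt_div_iff₀ hδ0]; linarith)
  set L := Real.log (1/δ) with hLdef
  set q := p.toReal with hqdef
  have hq0 : 0 ≤ q := ENNReal.toReal_nonneg
  have hq1 : q ≤ 1 := by
    simpa using ENNReal.toReal_mono ENNReal.one_ne_top hp1
  set μ := Measure.pi (fun _ : Fin m => (PMF.bernoulli p.toNNReal (by simpa using ENNReal.toNNReal_mono ENNReal.one_ne_top hp1)).toMeasure) with hμ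
  have hprob : IsProbabilityMeasure μ := by rw [hμ]; infer_instance
  have hmpos : (0:ℝ) < m := Nat.cast_pos.mpr hm
  set S : (Fin m → Bool) → ℝ := fun ω => ∑ i, (if ω i = true then (1:ℝ) else 0) with hS
  have hEF : ∀ ω, empFreq m ω = S ω / m := by
    intro ω
    rw [empFreq, hS]
    congr 1
    rw [Finset.card_filter]
    push_cast
    rfl
  have hEFnn : ∀ ω, 0 ≤ empFreq m ω := by
    intro ω
    rw [empFreq]
    positivity
  set t := Real.sqrt (2*q*L/m) with htdef
  set G : Set (Fin m → Bool) :=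
    {ω | q ≤ empFreq m ω + Real.sqrt (2 * empFreq m ω * L / m) + 4 * L / m} with hG
  show μ G ≥ 1 - ENNReal.ofReal δ
  rcases eq_or_lt_of_le hq0 with hq0' | hqpos
  · -- p = 0 : the event is everything
    have hGuniv : G = Set.univ := by
      apply Set.eq_univ_of_forall
      intro ω
      rw [hG, Set.mem_setOf_eq, ← hq0']
      have h1 := hEFnn ω
      have h2 : 0 ≤ Real.sqrt (2 * empFreq m ω * L / m) := Real.sqrt_nonneg _
      have h3 : 0 ≤ 4 * L / (m:ℝ) := by positivity
      linarith
    rw [ge_iff_le, hGuniv, measure_univ]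
    exact tsub_le_self
  set B : Set (Fin m → Bool) := {ω | S ω ≤ m*(q-t)} with hB
  have hdet : ∀ ω, ω ∉ B → ω ∈ G := by
    intro ω hω
    rw [hB, Set.mem_setOf_eq, not_le] at hω
    have h1 : q - t < S ω / m := by rw [lt_div_iff₀ hmpos]; linarith [mul_comm (q-t) (m:ℝ)]
    rw [← hEF] at h1
    have h2 : q ≤ empFreq m ω + t := by linarith
    exact det_aux hq0 (hEFnn ω) hL.le hmpos (by rwa [htdef] at h2)
  -- the key tail bound
  have hBmeas : μ B ≤ ENNReal.ofReal δ := by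
    set lam := t/q with hlam
    have hlamnn : 0 ≤ lam := div_nonneg (Real.sqrt_nonneg _) hq0
    have hint : Integrable (fun ω => Real.exp ((-lam) * S ω)) μ := .of_finite
    have hmark := ProbabilityTheory.measure_le_le_exp_mul_mgf (X := S) (μ := μ)
      (t := -lam) (m*(q-t)) (neg_nonpos.mpr hlamnn) hint
    -- compute the mgf
    have hmgf : ProbabilityTheory.mgf S μ (-lam)
        = ((1-q) + q * Real.exp (-lam))^m := by
      rw [ProbabilityTheory.mgf]
      letI : MeasureSpace Bool := ⟨(PMF.bernoulli p.toNNReal (by simpa using ENNReal.toNNReal_mono ENNReal.one_ne_top hp1)).toMeasure⟩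
      haveI : IsProbabilityMeasure (volume : Measure Bool) :=
        PMF.toMeasure.isProbabilityMeasure _
      have hfun : (fun ω : Fin m → Bool => Real.exp ((-lam) * S ω))
          = fun ω => ∏ i, (fun b => Real.exp ((-lam) * if b = true then 1 else 0)) (ω i) := by
        funext ω
        rw [hS, Finset.mul_sum, Real.exp_sum]
      show ∫ ω, Real.exp ((-lam) * S ω) ∂μ = _
      rw [hfun]
      have hμvol : μ = (volume : Measure (Fin m → Bool)) := rfl
      rw [hμ, MeasureTheory.integral_fintype_prod_eq_pow (ι := Fin m)
        (fun b => Real.exp ((-lam) * if b = true then 1 else 0)), Fintype.card_fin]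
      congr 1
      show ∫ b, Real.exp ((-lam) * if b = true then 1 else 0)
          ∂(PMF.bernoulli p.toNNReal (by simpa using ENNReal.toNNReal_mono ENNReal.one_ne_top hp1)).toMeasure = _
      rw [PMF.integral_eq_sum]
      simp only [Fintype.sum_bool, PMF.bernoulli, PMF.ofFintype_apply, cond_true, cond_false]
      rw [ENNReal.coe_toNNReal (ne_top_of_le_ne_top ENNReal.one_ne_top hp1)]
      rw [ENNReal.toReal_sub_of_le hp1 ENNReal.one_ne_top]
      simp only [smul_eq_mul, ENNReal.toReal_one, ← hqdef, Bool.false_eq_true, if_true,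
        if_false, mul_one, mul_zero, Real.exp_zero]
      ring
    -- bound the rhs
    have ht2 : t^2 = 2*q*L/m := Real.sq_sqrt (by positivity)
    have hqne : q ≠ 0 := ne_of_gt hqpos
    have hmne : (m:ℝ) ≠ 0 := ne_of_gt hmpos
    have hbase0 : 0 ≤ (1-q) + q * Real.exp (-lam) := by
      have := Real.exp_pos (-lam)
      nlinarith
    have e1 : (1-q) + q * Real.exp (-lam) ≤ Real.exp (q*(Real.exp (-lam) - 1)) := by
      have := Real.add_one_le_exp (q*(Real.exp (-lam) - 1))
      linarith
    have e2 : ((1-q) + q * Real.exp (-lam))^m ≤ Real.exp (q*(Real.exp (-lam)-1))^m :=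
      pow_le_pow_left₀ hbase0 e1 m
    have e3 : Real.exp (q*(Real.exp (-lam)-1))^m = Real.exp (m*(q*(Real.exp (-lam)-1))) := by
      rw [← Real.exp_nat_mul]
    have e4 : Real.exp (-lam) - 1 ≤ -lam + lam^2/2 := by
      have := exp_neg_le_quadratic' hlamnn
      linarith
    have e5 : (m:ℝ)*(q*(Real.exp (-lam)-1)) ≤ m*(q*(-lam+lam^2/2)) := by
      apply mul_le_mul_of_nonneg_left _ hmpos.le
      exact mul_le_mul_of_nonneg_left e4 hq0
    have e6 : - -lam * ((m:ℝ)*(q-t)) + m*(q*(-lam+lam^2/2)) = -L := by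
      have eA : - -lam * ((m:ℝ)*(q-t)) + m*(q*(-lam+lam^2/2)) = -((m:ℝ)*t^2/(2*q)) := by
        rw [hlam]
        field_simp
        ring
      rw [eA, ht2]
      field_simp
    have hexpL : Real.exp (-L) = δ := by
      rw [hLdef, one_div, Real.log_inv, neg_neg, Real.exp_log hδ0]
    have hchain : Real.exp (- -lam * ((m:ℝ)*(q-t))) * ((1-q) + q * Real.exp (-lam))^m ≤ δ := by
      calc Real.exp (- -lam * ((m:ℝ)*(q-t))) * ((1-q) + q * Real.exp (-lam))^m
          ≤ Real.exp (- -lam * ((m:ℝ)*(q-t))) * Real.exp (m*(q*(Real.exp (-lam)-1))) := by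
            rw [← e3]
            exact mul_le_mul_of_nonneg_left e2 (Real.exp_pos _).le
        _ = Real.exp (- -lam * ((m:ℝ)*(q-t)) + m*(q*(Real.exp (-lam)-1))) :=
            (Real.exp_add _ _).symm
        _ ≤ Real.exp (-L) := by
            apply Real.exp_le_exp.mpr
            linarith [e5, e6]
        _ = δ := hexpL
    have htoReal : (μ B).toReal ≤ δ := by
      rw [hmgf] at hmark
      exact hmark.trans hchain
    rw [← ENNReal.ofReal_toReal (measure_ne_top μ B)]
    exact ENNReal.ofReal_le_ofReal htoReal
  -- conclude
  have hcover : (1:ℝ≥0∞) ≤ μ G + μ B := by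
    have hsub : (Set.univ : Set (Fin m → Bool)) ⊆ G ∪ B := by
      intro ω _
      by_cases h : ω ∈ B
      · exact Or.inr h
      · exact Or.inl (hdet ω h)
    calc (1:ℝ≥0∞) = μ Set.univ := (measure_univ).symm
      _ ≤ μ (G ∪ B) := measure_mono hsub
      _ ≤ μ G + μ B := measure_union_le _ _
  rw [ge_iff_le, tsub_le_iff_right]
  calc (1:ℝ≥0∞) ≤ μ G + μ B := hcover
    _ ≤ μ G + ENNReal.ofReal δ := add_le_add_right hBmeas _
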